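/- Under the Weierstrass decomposition hypothesis, for every Y_0 ∈ ℂ^m the sequence Ŷ_k = Q_p · J^k · (Q_p^*Q_p)^{-1} Q_p^* · Y_0 (k ≥ 0) is a solution of the system F Y_{k+1} = G Y_k, and its initial value Ŷ_0 equals the orthogonal projection Q_p (Q_p^*Q_p)^{-1} Q_p^* Y_0 of Y_0 onto the column span of Q_p. -/

import Mathlib

open Matrix Filter Topology

noncomputable section

/-- Euclidean (ℓ²) norm on ℂ-vectors indexed by a finite type. -/
def euclNorm {n : Type*} [Fintype n] (v : n → ℂ) : ℝ :=
  ‖(WithLp.equiv 2 (n → ℂ)).symm v‖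

/-- Operator norm of a matrix, induced by the Euclidean norms. -/
def matOpNorm {α β : Type*} [Fintype α] [Fintype β] [DecidableEq β]
    (A : Matrix α β ℂ) : ℝ :=
  ‖LinearMap.toContinuousLinearMap (Matrix.toEuclideanLin A)‖
/-- Theorem 2.2: the optimal sequence `Ŷ_k = Q_p J^k (Q_p^*Q_p)⁻¹ Q_p^* Y₀` is a
solution of `F Y_{k+1} = G Y_k`, and its initial value is the orthogonal
projection of `Y₀` onto the column span of `Q_p`. -/
theorem optimal_solution_is_solution (p q : ℕ) (hp : 1 ≤ p)
    (F G P Q : Matrix (Fin p ⊕ Fin q) (Fin p ⊕ Fin q) ℂ)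
    (J : Matrix (Fin p) (Fin p) ℂ) (H : Matrix (Fin q) (Fin q) ℂ)
    (hP : IsUnit P) (hQ : IsUnit Q) (hH : IsNilpotent H)
    (hF : P * F * Q = Matrix.fromBlocks 1 0 0 H)
    (hG : P * G * Q = Matrix.fromBlocks J 0 0 1)
    (Qp : Matrix (Fin p ⊕ Fin q) (Fin p) ℂ)
    (hQp : Qp = Q.submatrix id Sum.inl)
    (Y0 : (Fin p ⊕ Fin q) → ℂ) :
    (∀ k : ℕ,
      F.mulVec (Qp.mulVec ((J ^ (k + 1)).mulVec (((Qpᴴ * Qp)⁻¹ * Qpᴴ).mulVec Y0))) =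
        G.mulVec (Qp.mulVec ((J ^ k).mulVec (((Qpᴴ * Qp)⁻¹ * Qpᴴ).mulVec Y0)))) ∧
      Qp.mulVec ((J ^ 0).mulVec (((Qpᴴ * Qp)⁻¹ * Qpᴴ).mulVec Y0)) =
        Qp.mulVec (((Qpᴴ * Qp)⁻¹ * Qpᴴ).mulVec Y0) := by
  have hPdet : IsUnit P.det := (Matrix.isUnit_iff_isUnit_det P).mp hP
  have hQdet : IsUnit Q.det := (Matrix.isUnit_iff_isUnit_det Q).mp hQ
  have hPinv : P⁻¹ * P = 1 := Matrix.nonsing_inv_mul P hPdet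
  have hQinv : Q⁻¹ * Q = 1 := Matrix.nonsing_inv_mul Q hQdet
  have hQinv' : Q * Q⁻¹ = 1 := Matrix.mul_nonsing_inv Q hQdet
  set E : Matrix (Fin p ⊕ Fin q) (Fin p) ℂ :=
    (1 : Matrix (Fin p ⊕ Fin q) (Fin p ⊕ Fin q) ℂ).submatrix id Sum.inl with hE
  have hQpE : Qp = Q * E := by
    subst hQp
    ext i j
    simp [hE, Matrix.mul_apply, Matrix.one_apply, Matrix.submatrix_apply]
  have hBF : Matrix.fromBlocks (1 : Matrix (Fin p) (Fin p) ℂ) 0 0 H * E = E := by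
    ext i j
    cases i with
    | inl a => simp [hE, Matrix.mul_apply, Matrix.one_apply, Matrix.submatrix_apply,
        Fintype.sum_sum_type]
    | inr a => simp [hE, Matrix.mul_apply, Matrix.one_apply, Matrix.submatrix_apply,
        Fintype.sum_sum_type]
  have hBG : Matrix.fromBlocks J 0 0 (1 : Matrix (Fin q) (Fin q) ℂ) * E = E * J := by
    ext i j
    cases i with
    | inl a => simp [hE, Matrix.mul_apply, Matrix.one_apply, Matrix.submatrix_apply,
        Fintype.sum_sum_type]
    | inr a => simp [hE, Matrix.mul_apply, Matrix.one_apply, Matrix.submatrix_apply,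
        Fintype.sum_sum_type]
  have hFeq : F = P⁻¹ * Matrix.fromBlocks 1 0 0 H * Q⁻¹ := by
    rw [← hF]
    calc F = P⁻¹ * P * (F * (Q * Q⁻¹)) := by
            rw [hPinv, hQinv', Matrix.mul_one, Matrix.one_mul]
      _ = P⁻¹ * (P * F * Q) * Q⁻¹ := by simp only [Matrix.mul_assoc]
  have hGeq : G = P⁻¹ * Matrix.fromBlocks J 0 0 1 * Q⁻¹ := by
    rw [← hG]
    calc G = P⁻¹ * P * (G * (Q * Q⁻¹)) := by
            rw [hPinv, hQinv', Matrix.mul_one, Matrix.one_mul]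
      _ = P⁻¹ * (P * G * Q) * Q⁻¹ := by simp only [Matrix.mul_assoc]
  have hFQp : F * Qp = P⁻¹ * E := by
    rw [hFeq, hQpE]
    calc P⁻¹ * Matrix.fromBlocks 1 0 0 H * Q⁻¹ * (Q * E)
        = P⁻¹ * ((Matrix.fromBlocks 1 0 0 H : Matrix (Fin p ⊕ Fin q) (Fin p ⊕ Fin q) ℂ) * (Q⁻¹ * Q * E)) := by
          simp only [Matrix.mul_assoc]
      _ = P⁻¹ * E := by rw [hQinv, Matrix.one_mul, hBF]
  have hGQp : G * Qp = P⁻¹ * (E * J) := by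
    rw [hGeq, hQpE]
    calc P⁻¹ * Matrix.fromBlocks J 0 0 1 * Q⁻¹ * (Q * E)
        = P⁻¹ * ((Matrix.fromBlocks J 0 0 1 : Matrix (Fin p ⊕ Fin q) (Fin p ⊕ Fin q) ℂ) * (Q⁻¹ * Q * E)) := by
          simp only [Matrix.mul_assoc]
      _ = P⁻¹ * (E * J) := by rw [hQinv, Matrix.one_mul, hBG]
  constructor
  · intro k
    have key : F * Qp * J ^ (k + 1) = G * Qp * J ^ k := by
      rw [hFQp, hGQp, pow_succ']
      simp only [Matrix.mul_assoc]
    simp only [Matrix.mulVec_mulVec, ← Matrix.mul_assoc]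
    rw [key]
  · rw [pow_zero, Matrix.one_mulVec]
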